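/- Let K = HahnSeries ℝ ℂ be the field of Hahn series with real exponents and complex coefficients (containing the Novikov field), with additive valuation v = addVal. Let n ≥ 3 be a natural number, let λ₂ > λ₃ be real numbers, and let r be a real number with 2r > (n+4)λ₂ − (n+2)λ₃. Let b, c, d, z be nonzero elements of K with v(b) = λ₂, v(c) = λ₃, v(d) = r + n·λ₃. If c^(n−2)·z⁶·(z+b)ⁿ·(n·z+b)^(n−2) = bⁿ·d², then either v(z) = (2r + (2−n)λ₂ + (n+2)λ₃)/6 or v(z) = λ₂. -/
import Mathlib


open HahnSeries

/-- possible valuations of solutions `z` of the reduced critical point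
equation, in the Hahn series field `HahnSeries ℝ ℂ`. -/
theorem stmt_2 (n : ℕ) (hn : 3 ≤ n) (l2 l3 r : ℝ) (hl : l2 > l3)
    (hr : 2 * r > ((n : ℝ) + 4) * l2 - ((n : ℝ) + 2) * l3)
    (b c d z : HahnSeries ℝ ℂ)
    (hb : b ≠ 0) (hc : c ≠ 0) (hd : d ≠ 0) (hz : z ≠ 0)
    (hvb : addVal ℝ ℂ b = (l2 : WithTop ℝ))
    (hvc : addVal ℝ ℂ c = (l3 : WithTop ℝ))
    (hvd : addVal ℝ ℂ d = ((r + n * l3 : ℝ) : WithTop ℝ))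
    (heq : c ^ (n - 2) * z ^ 6 * (z + b) ^ n * ((n : HahnSeries ℝ ℂ) * z + b) ^ (n - 2)
        = b ^ n * d ^ 2) :
    addVal ℝ ℂ z = (((2 * r + (2 - (n : ℝ)) * l2 + ((n : ℝ) + 2) * l3) / 6 : ℝ) : WithTop ℝ) ∨
    addVal ℝ ℂ z = (l2 : WithTop ℝ) := by
  set V := addVal ℝ ℂ with hV
  have hnC : ((n : ℂ)) ≠ 0 := Nat.cast_ne_zero.mpr (by omega)
  have hvn : V ((n : HahnSeries ℝ ℂ)) = (0 : WithTop ℝ) := by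
    have h1 : ((n : ℕ) : HahnSeries ℝ ℂ) = HahnSeries.C ((n : ℂ)) :=
      (map_natCast (HahnSeries.C : ℂ →+* HahnSeries ℝ ℂ) n).symm
    rw [hV, addVal_apply, h1, C_apply, orderTop_single hnC]
    rfl
  obtain ⟨μ, hμ⟩ := WithTop.ne_top_iff_exists.mp ((addVal ℝ ℂ).ne_top_iff.mpr hz)
  have hμ' : V z = (μ : WithTop ℝ) := hμ.symm
  have hnsub : ((n - 2 : ℕ) : ℝ) = (n : ℝ) - 2 := by
    rw [Nat.cast_sub (by omega)]; norm_num
  have hn3 : (3 : ℝ) ≤ (n : ℝ) := by exact_mod_cast hn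
  have H := congrArg V heq
  rw [AddValuation.map_mul, AddValuation.map_mul, AddValuation.map_mul, AddValuation.map_mul, AddValuation.map_pow, AddValuation.map_pow, AddValuation.map_pow, AddValuation.map_pow, AddValuation.map_pow, AddValuation.map_pow] at H
  rcases lt_trichotomy μ l2 with h | h | h
  · -- impossible case
    exfalso
    have hzb : V (z + b) = V z := by
      apply AddValuation.map_add_eq_of_lt_left
      rw [hμ', hvb]; exact_mod_cast h
    have hnz : V ((n : HahnSeries ℝ ℂ) * z) = V z := by
      rw [AddValuation.map_mul, hvn, zero_add]
    have hnzb : V ((n : HahnSeries ℝ ℂ) * z + b) = V z := by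
      rw [← hnz]
      apply AddValuation.map_add_eq_of_lt_left
      rw [hnz, hμ', hvb]; exact_mod_cast h
    rw [hzb, hnzb, hμ', hvb, hvc, hvd] at H
    have H' : (n - 2) • l3 + 6 • μ + n • μ + (n - 2) • μ
        = n • l2 + 2 • (r + n * l3) := by exact_mod_cast H
    simp only [nsmul_eq_mul, hnsub] at H'
    push_cast at H'
    nlinarith [H', h, hn3, hr]
  · right; rw [hμ', h]
  · -- main case
    left
    have hzb : V (z + b) = (l2 : WithTop ℝ) := by
      rw [← hvb]
      apply AddValuation.map_add_eq_of_lt_right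
      rw [hμ', hvb]; exact_mod_cast h
    have hnzb : V ((n : HahnSeries ℝ ℂ) * z + b) = (l2 : WithTop ℝ) := by
      rw [← hvb]
      apply AddValuation.map_add_eq_of_lt_right
      rw [AddValuation.map_mul, hvn, zero_add, hμ', hvb]; exact_mod_cast h
    rw [hzb, hnzb, hμ', hvc, hvd, hvb] at H
    have H' : (n - 2) • l3 + 6 • μ + n • l2 + (n - 2) • l2
        = n • l2 + 2 • (r + n * l3) := by exact_mod_cast H
    simp only [nsmul_eq_mul, hnsub] at H'
    push_cast at H'
    have hfin : μ = (2 * r + (2 - (n : ℝ)) * l2 + ((n : ℝ) + 2) * l3) / 6 := by linarith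
    rw [hμ', hfin]
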